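/- Every subset Q of a free boolean algebra B has a dense subset D (dense meaning every element of Q has a lower bound in D within Q) such that every element of D lies below only finitely many elements of D; i.e., every subset of a free boolean algebra is almost ω^op-like. -/

import Mathlib

open Cardinal

variable {B : Type u} [BooleanAlgebra B]

/-- The boolean subalgebra of `B` generated by `S`: the smallest subset of `B`
containing `S` and `⊥` and closed under complements and joins. -/
def boolGen (S : Set B) : Set B :=
  ⋂₀ {T : Set B | S ⊆ T ∧ (⊥ : B) ∈ T ∧ (∀ x ∈ T, xᶜ ∈ T) ∧ ∀ x ∈ T, ∀ y ∈ T, x ⊔ y ∈ T}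

/-- `G` is an independent (free) set of generators: every nontrivial finite meet of
generators and complements of generators is nonzero. -/
def IsFreeGens (G : Set B) : Prop :=
  ∀ s t : Finset B, ↑s ⊆ G → ↑t ⊆ G → Disjoint s t →
    s.inf id ⊓ t.inf (·ᶜ) ≠ ⊥

universe u

namespace AOL

theorem subset_boolGen {S : Set B} : S ⊆ boolGen S := by
  intro x hx T hT; exact hT.1 hx

theorem bot_mem_boolGen {S : Set B} : (⊥ : B) ∈ boolGen S := by
  intro T hT; exact hT.2.1

theorem compl_mem_boolGen {S : Set B} {x : B} (hx : x ∈ boolGen S) : xᶜ ∈ boolGen S := by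
  intro T hT; exact hT.2.2.1 x (hx T hT) 

theorem sup_mem_boolGen {S : Set B} {x y : B} (hx : x ∈ boolGen S) (hy : y ∈ boolGen S) :
    x ⊔ y ∈ boolGen S := by
  intro T hT; exact hT.2.2.2 x (hx T hT) y (hy T hT)

theorem top_mem_boolGen {S : Set B} : (⊤ : B) ∈ boolGen S := by
  have := compl_mem_boolGen (bot_mem_boolGen (S := S))
  simpa using this

theorem inf_mem_boolGen {S : Set B} {x y : B} (hx : x ∈ boolGen S) (hy : y ∈ boolGen S) :
    x ⊓ y ∈ boolGen S := by
  have : x ⊓ y = (xᶜ ⊔ yᶜ)ᶜ := by simp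
  rw [this]
  exact compl_mem_boolGen (sup_mem_boolGen (compl_mem_boolGen hx) (compl_mem_boolGen hy))

theorem boolGen_subset {S T : Set B} (hST : S ⊆ T)
    (hbot : (⊥ : B) ∈ T) (hcompl : ∀ x ∈ T, xᶜ ∈ T) (hsup : ∀ x ∈ T, ∀ y ∈ T, x ⊔ y ∈ T) :
    boolGen S ⊆ T := fun _ hx => hx T ⟨hST, hbot, hcompl, hsup⟩

theorem boolGen_induction {S : Set B} {P : B → Prop} {b : B} (hb : b ∈ boolGen S)
    (hgen : ∀ x ∈ S, P x) (hbot : P ⊥) (hcompl : ∀ x, P x → P xᶜ)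
    (hsup : ∀ x y, P x → P y → P (x ⊔ y)) : P b := by
  have : boolGen S ⊆ {x | P x ∧ x ∈ boolGen S} := by
    apply boolGen_subset
    · exact fun x hx => ⟨hgen x hx, subset_boolGen hx⟩
    · exact ⟨hbot, bot_mem_boolGen⟩
    · exact fun x hx => ⟨hcompl x hx.1, compl_mem_boolGen hx.2⟩
    · exact fun x hx y hy => ⟨hsup x y hx.1 hy.1, sup_mem_boolGen hx.2 hy.2⟩
  exact (this hb).1

theorem boolGen_mono {S T : Set B} (h : S ⊆ T) : boolGen S ⊆ boolGen T := by
  intro b hb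
  exact boolGen_induction hb (fun x hx => subset_boolGen (h hx)) bot_mem_boolGen
    (fun x hx => compl_mem_boolGen hx) (fun x y hx hy => sup_mem_boolGen hx hy)

theorem mem_boolGen_finite {S : Set B} {b : B} (hb : b ∈ boolGen S) :
    ∃ F : Finset B, ↑F ⊆ S ∧ b ∈ boolGen (↑F : Set B) := by
  classical
  refine boolGen_induction (P := fun b => ∃ F : Finset B, ↑F ⊆ S ∧ b ∈ boolGen (↑F : Set B)) hb ?_ ?_ ?_ ?_
  · exact fun x hx => ⟨{x}, by simpa using hx, subset_boolGen (by simp)⟩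
  · exact ⟨∅, by simp, bot_mem_boolGen⟩
  · rintro x ⟨F, hF, hx⟩; exact ⟨F, hF, compl_mem_boolGen hx⟩
  · rintro x y ⟨F, hF, hx⟩ ⟨F', hF', hy⟩
    refine ⟨F ∪ F', by simp [Finset.coe_union, Set.union_subset_iff, hF, hF'], ?_⟩
    have hx' : x ∈ boolGen (↑(F ∪ F') : Set B) := boolGen_mono (by simp [Finset.coe_union]) hx
    have hy' : y ∈ boolGen (↑(F ∪ F') : Set B) :=
      boolGen_mono (by simp [Finset.coe_union]) hy
    exact sup_mem_boolGen hx' hy'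

theorem boolGen_iUnion_nat {S : ℕ → Set B} (hmono : Monotone S) {b : B}
    (hb : b ∈ boolGen (⋃ n, S n)) : ∃ n, b ∈ boolGen (S n) := by
  classical
  obtain ⟨F, hF, hbF⟩ := mem_boolGen_finite hb
  have key : ∀ F : Finset B, (↑F : Set B) ⊆ (⋃ n, S n) → ∃ n, (↑F : Set B) ⊆ S n := by
    intro F
    induction F using Finset.induction_on with
    | empty => exact fun _ => ⟨0, by simp⟩
    | @insert a F ha ih =>
      intro hsub
      obtain ⟨n, hn⟩ := ih (fun x hx => hsub (by simp at hx ⊢; exact Or.inr hx))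
      obtain ⟨m, hm⟩ : ∃ m, a ∈ S m := by
        have := hsub (by simp : (a : B) ∈ (↑(insert a F) : Set B))
        simpa using this
      refine ⟨max n m, ?_⟩
      intro x hx
      rcases Finset.mem_insert.mp (by exact_mod_cast hx) with rfl | hx
      · exact hmono (le_max_right n m) hm
      · exact hmono (le_max_left n m) (hn hx)
  obtain ⟨n, hn⟩ := key F hF
  exact ⟨n, boolGen_mono hn hbF⟩

theorem finsetInf_mem_boolGen {S : Set B} {f : B → B} {t : Finset B}
    (h : ∀ x ∈ t, f x ∈ boolGen S) : t.inf f ∈ boolGen S := by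
  classical
  induction t using Finset.induction_on with
  | empty => simpa using top_mem_boolGen
  | @insert a t ha ih =>
    rw [Finset.inf_insert]
    exact inf_mem_boolGen (h a (by simp)) (ih fun x hx => h x (by simp [hx]))

theorem finsetSup_mem_boolGen {S : Set B} {ι : Type*} {f : ι → B} {t : Finset ι}
    (h : ∀ x ∈ t, f x ∈ boolGen S) : t.sup f ∈ boolGen S := by
  classical
  induction t using Finset.induction_on with
  | empty => simpa using bot_mem_boolGen
  | @insert a t ha ih =>
    rw [Finset.sup_insert]
    exact sup_mem_boolGen (h a (by simp)) (ih fun x hx => h x (by simp [hx]))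

section Elem

variable [DecidableEq B]

/-- The elementary product over `F` with positive part `s`. -/
def elemProd (F s : Finset B) : B := s.inf id ⊓ (F \ s).inf (·ᶜ)

theorem elemProd_mem_boolGen {F s : Finset B} (hs : s ⊆ F) :
    elemProd F s ∈ boolGen (↑F : Set B) := by
  refine inf_mem_boolGen (finsetInf_mem_boolGen fun x hx => ?_)
    (finsetInf_mem_boolGen fun x hx => ?_)
  · exact subset_boolGen (by exact_mod_cast hs hx)
  · exact compl_mem_boolGen (subset_boolGen (by exact_mod_cast (Finset.sdiff_subset hx)))

theorem elemProd_le_pos {F s : Finset B} {a : B} (ha : a ∈ s) : elemProd F s ≤ a :=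
  le_trans inf_le_left (Finset.inf_le ha)

theorem elemProd_le_neg {F s : Finset B} {a : B} (ha : a ∈ F) (ha' : a ∉ s) :
    elemProd F s ≤ aᶜ :=
  le_trans inf_le_right (Finset.inf_le (Finset.mem_sdiff.mpr ⟨ha, ha'⟩))

theorem elemProd_inf_bot {F s H t : Finset B} {a : B}
    (h1 : a ∈ s) (h2 : a ∈ H) (h3 : a ∉ t) : elemProd F s ⊓ elemProd H t = ⊥ := by
  have h := inf_le_inf (elemProd_le_pos (F := F) h1) (elemProd_le_neg h2 h3)
  rw [inf_compl_eq_bot] at h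
  exact le_bot_iff.mp h

theorem sup_powerset_elemProd (F : Finset B) : F.powerset.sup (elemProd F) = ⊤ := by
  induction F using Finset.induction_on with
  | empty => simp [elemProd]
  | @insert a F ha ih =>
    rw [Finset.powerset_insert, Finset.sup_union, Finset.sup_image]
    have h1 : ∀ s ∈ F.powerset, elemProd (insert a F) s = aᶜ ⊓ elemProd F s := by
      intro s hs
      have hs' : a ∉ s := fun h => ha (Finset.mem_powerset.mp hs h)
      have : insert a F \ s = insert a (F \ s) := by
        rw [Finset.insert_sdiff_of_notMem _ hs']
      rw [elemProd, this, Finset.inf_insert, elemProd]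
      rw [inf_left_comm]
    have h2 : ∀ s ∈ F.powerset, (elemProd (insert a F) ∘ insert a) s = a ⊓ elemProd F s := by
      intro s hs
      have hs' : a ∉ s := fun h => ha (Finset.mem_powerset.mp hs h)
      have hFs : insert a F \ insert a s = F \ s := by
        ext x
        simp only [Finset.mem_sdiff, Finset.mem_insert]
        constructor
        · rintro ⟨h | h, hn⟩
          · exact absurd (Or.inl h) hn
          · exact ⟨h, fun hx => hn (Or.inr hx)⟩
        · rintro ⟨hxF, hxs⟩
          refine ⟨Or.inr hxF, ?_⟩
          rintro (rfl | h)
          · exact ha hxF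
          · exact hxs h
      show elemProd (insert a F) (insert a s) = a ⊓ elemProd F s
      rw [elemProd, hFs, Finset.inf_insert, elemProd]
      rw [inf_assoc]
      rfl
    rw [Finset.sup_congr rfl h1, Finset.sup_congr rfl h2]
    rw [← Finset.sup_inf_distrib_left, ← Finset.sup_inf_distrib_left, ih]
    simp

theorem elemProd_disjoint {F s t : Finset B} (hs : s ⊆ F) (ht : t ⊆ F) (hst : s ≠ t) :
    elemProd F s ⊓ elemProd F t = ⊥ := by
  by_cases h : ∃ a ∈ s, a ∉ t
  · obtain ⟨a, h1, h2⟩ := h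
    exact elemProd_inf_bot h1 (hs h1) h2
  · push_neg at h
    have : ∃ a ∈ t, a ∉ s := by
      by_contra h'
      push_neg at h'
      exact hst (Finset.Subset.antisymm h h')
    obtain ⟨a, h1, h2⟩ := this
    rw [inf_comm]
    exact elemProd_inf_bot h1 (ht h1) h2

theorem exists_rep {F : Finset B} {b : B} (hb : b ∈ boolGen (↑F : Set B)) :
    ∃ 𝒜 : Finset (Finset B), 𝒜 ⊆ F.powerset ∧ b = 𝒜.sup (elemProd F) := by
  refine boolGen_induction
    (P := fun b => ∃ 𝒜 : Finset (Finset B), 𝒜 ⊆ F.powerset ∧ b = 𝒜.sup (elemProd F))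
    hb ?_ ?_ ?_ ?_
  · intro g hg
    have hgF : g ∈ F := by exact_mod_cast hg
    refine ⟨F.powerset.filter (fun s => g ∈ s), Finset.filter_subset _ _, ?_⟩
    apply le_antisymm
    · conv_lhs => rw [← inf_top_eq g, ← sup_powerset_elemProd F]
      rw [Finset.sup_inf_distrib_left]
      apply Finset.sup_le
      intro s hsF
      by_cases hgs : g ∈ s
      · exact le_trans inf_le_right
          (Finset.le_sup (Finset.mem_filter.mpr ⟨hsF, hgs⟩))
      · have : g ⊓ elemProd F s ≤ g ⊓ gᶜ :=
          inf_le_inf le_rfl (elemProd_le_neg hgF hgs)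
        simpa using le_trans this (by simp)
    · apply Finset.sup_le
      intro s hsfil
      exact elemProd_le_pos (Finset.mem_filter.mp hsfil).2
  · exact ⟨∅, by simp, by simp⟩
  · rintro x ⟨𝒜, h𝒜, rfl⟩
    refine ⟨F.powerset \ 𝒜, Finset.sdiff_subset, ?_⟩
    have hdisj : Disjoint (𝒜.sup (elemProd F)) ((F.powerset \ 𝒜).sup (elemProd F)) := by
      rw [Finset.disjoint_sup_right]
      intro t ht
      rw [Finset.disjoint_sup_left]
      intro s hs
      rw [disjoint_iff]
      refine elemProd_disjoint (Finset.mem_powerset.mp (h𝒜 hs))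
        (Finset.mem_powerset.mp (Finset.mem_sdiff.mp ht).1) ?_
      rintro rfl
      exact (Finset.mem_sdiff.mp ht).2 hs
    have hcodisj : Codisjoint (𝒜.sup (elemProd F)) ((F.powerset \ 𝒜).sup (elemProd F)) := by
      rw [codisjoint_iff]
      rw [← Finset.sup_union, Finset.union_sdiff_of_subset h𝒜, sup_powerset_elemProd]
    exact (IsCompl.compl_eq ⟨hdisj, hcodisj⟩)
  · rintro x y ⟨𝒜, h𝒜, rfl⟩ ⟨ℬ, hℬ, rfl⟩
    exact ⟨𝒜 ∪ ℬ, Finset.union_subset h𝒜 hℬ, by rw [Finset.sup_union]⟩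

theorem boolGen_finset_finite (F : Finset B) : (boolGen (↑F : Set B)).Finite := by
  apply Set.Finite.subset
    (Finset.finite_toSet (F.powerset.powerset.image (fun 𝒜 => 𝒜.sup (elemProd F))))
  intro b hb
  obtain ⟨𝒜, h𝒜, rfl⟩ := exists_rep hb
  simp only [Finset.coe_image, Set.mem_image, Finset.mem_coe, Finset.mem_powerset]
  exact ⟨𝒜, by simpa using h𝒜, rfl⟩

end Elem


section Interp

variable [DecidableEq B] {G : Set B}

theorem elemProd_ne_bot (hfree : IsFreeGens G) {F s : Finset B}
    (hF : ↑F ⊆ G) (hs : s ⊆ F) : elemProd F s ≠ ⊥ := by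
  refine hfree s (F \ s) (fun x hx => hF (by exact_mod_cast hs (by exact_mod_cast hx)))
    (fun x hx => hF (by
      have : x ∈ F \ s := by exact_mod_cast hx
      exact_mod_cast (Finset.mem_sdiff.mp this).1)) Finset.disjoint_sdiff

theorem elemProd_compat (hfree : IsFreeGens G) {F H s t : Finset B}
    (hF : ↑F ⊆ G) (hH : ↑H ⊆ G) (hs : s ⊆ F) (ht : t ⊆ H)
    (h1 : ∀ x ∈ t, x ∈ F → x ∈ s) (h2 : ∀ x ∈ s, x ∈ H → x ∈ t) :
    elemProd F s ⊓ elemProd H t ≠ ⊥ := by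
  have hsub1 : F \ s ⊆ (F ∪ H) \ (s ∪ t) := by
    intro x hx
    obtain ⟨hxF, hxs⟩ := Finset.mem_sdiff.mp hx
    refine Finset.mem_sdiff.mpr ⟨Finset.mem_union_left _ hxF, fun hx' => ?_⟩
    rcases Finset.mem_union.mp hx' with h | h
    · exact hxs h
    · exact hxs (h1 x h hxF)
  have hsub2 : H \ t ⊆ (F ∪ H) \ (s ∪ t) := by
    intro x hx
    obtain ⟨hxH, hxt⟩ := Finset.mem_sdiff.mp hx
    refine Finset.mem_sdiff.mpr ⟨Finset.mem_union_right _ hxH, fun hx' => ?_⟩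
    rcases Finset.mem_union.mp hx' with h | h
    · exact hxt (h2 x h hxH)
    · exact hxt h
  have hle : elemProd (F ∪ H) (s ∪ t) ≤ elemProd F s ⊓ elemProd H t := by
    refine le_inf (inf_le_inf ?_ ?_) (inf_le_inf ?_ ?_)
    · exact Finset.inf_mono Finset.subset_union_left
    · exact Finset.inf_mono hsub1
    · exact Finset.inf_mono Finset.subset_union_right
    · exact Finset.inf_mono hsub2
  have hne : elemProd (F ∪ H) (s ∪ t) ≠ ⊥ := by
    refine elemProd_ne_bot hfree ?_ (Finset.union_subset
      (hs.trans Finset.subset_union_left) (ht.trans Finset.subset_union_right))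
    rw [Finset.coe_union]
    exact Set.union_subset hF hH
  intro hbot
  exact hne (le_bot_iff.mp (hbot ▸ hle))

theorem agree_of_ne_bot {F H s t : Finset B} (hs : s ⊆ F) (ht : t ⊆ H)
    (h : elemProd F s ⊓ elemProd H t ≠ ⊥) : s ∩ H = t ∩ F := by
  ext x
  simp only [Finset.mem_inter]
  constructor
  · rintro ⟨hxs, hxH⟩
    refine ⟨?_, hs hxs⟩
    by_contra hxt
    exact h (elemProd_inf_bot hxs hxH hxt)
  · rintro ⟨hxt, hxF⟩
    refine ⟨?_, ht hxt⟩
    by_contra hxs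
    rw [inf_comm] at h
    exact h (elemProd_inf_bot hxt hxF hxs)

theorem interp (hfree : IsFreeGens G) {F H : Finset B} (hF : ↑F ⊆ G) (hH : ↑H ⊆ G)
    {x y : B} (hx : x ∈ boolGen (↑F : Set B)) (hy : y ∈ boolGen (↑H : Set B)) (hxy : x ≤ y) :
    ∃ r ∈ boolGen (↑(F ∩ H) : Set B), x ≤ r ∧ r ≤ y := by
  obtain ⟨𝒜, h𝒜, rfl⟩ := exists_rep hx
  obtain ⟨𝒞, h𝒞, hyc⟩ := exists_rep (compl_mem_boolGen hy)
  set r : B := (𝒜.image (· ∩ H)).sup (elemProd (F ∩ H)) with hr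
  have hrmem : r ∈ boolGen (↑(F ∩ H) : Set B) := by
    refine finsetSup_mem_boolGen ?_
    intro u hu
    obtain ⟨s, hs, rfl⟩ := Finset.mem_image.mp hu
    exact elemProd_mem_boolGen
      (Finset.inter_subset_inter (Finset.mem_powerset.mp (h𝒜 hs)) Finset.Subset.rfl)
  have hler : 𝒜.sup (elemProd F) ≤ r := by
    apply Finset.sup_le
    intro s hs
    have hsF : s ⊆ F := Finset.mem_powerset.mp (h𝒜 hs)
    have h1 : elemProd F s ≤ elemProd (F ∩ H) (s ∩ H) := by
      refine inf_le_inf (Finset.inf_mono Finset.inter_subset_left) (Finset.inf_mono ?_)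
      intro z hz
      obtain ⟨hz1, hz2⟩ := Finset.mem_sdiff.mp hz
      exact Finset.mem_sdiff.mpr ⟨(Finset.mem_inter.mp hz1).1,
        fun h' => hz2 (Finset.mem_inter.mpr ⟨h', (Finset.mem_inter.mp hz1).2⟩)⟩
    exact h1.trans (Finset.le_sup (Finset.mem_image_of_mem _ hs))
  refine ⟨r, hrmem, hler, ?_⟩
  apply Finset.sup_le
  intro u hu
  obtain ⟨s, hs𝒜, rfl⟩ := Finset.mem_image.mp hu
  have hsF : s ⊆ F := Finset.mem_powerset.mp (h𝒜 hs𝒜)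
  set u := s ∩ H with hu'
  have huFH : u ⊆ F ∩ H := Finset.inter_subset_inter hsF Finset.Subset.rfl
  -- show elemProd (F ∩ H) u ≤ y by contradiction
  by_contra hnot
  have hbot : elemProd (F ∩ H) u ⊓ yᶜ ≠ ⊥ := by
    intro hb
    apply hnot
    have : elemProd (F ∩ H) u ⊓ (y ⊔ yᶜ) = elemProd (F ∩ H) u := by simp
    calc elemProd (F ∩ H) u = elemProd (F ∩ H) u ⊓ (y ⊔ yᶜ) := this.symm
      _ = (elemProd (F ∩ H) u ⊓ y) ⊔ (elemProd (F ∩ H) u ⊓ yᶜ) := inf_sup_left _ _ _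
      _ = elemProd (F ∩ H) u ⊓ y := by rw [hb, sup_bot_eq]
      _ ≤ y := inf_le_right
  rw [hyc] at hbot
  rw [Finset.sup_inf_distrib_left] at hbot
  have : ∃ t ∈ 𝒞, elemProd (F ∩ H) u ⊓ elemProd H t ≠ ⊥ := by
    by_contra hall
    push_neg at hall
    exact hbot (le_bot_iff.mp (Finset.sup_le (fun t ht => le_of_eq (hall t ht))))
  obtain ⟨t, ht𝒞, htne⟩ := this
  have htH : t ⊆ H := Finset.mem_powerset.mp (h𝒞 ht𝒞)
  -- agreement: u ∩ H = t ∩ (F ∩ H)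
  have hagree : u ∩ H = t ∩ (F ∩ H) := agree_of_ne_bot huFH htH htne
  have huH : u ∩ H = u := by
    apply Finset.inter_eq_left.mpr
    exact fun z hz => (Finset.mem_inter.mp (huFH hz)).2
  rw [huH] at hagree
  -- now s and t are compatible
  have hcompat : elemProd F s ⊓ elemProd H t ≠ ⊥ := by
    refine elemProd_compat hfree hF hH hsF htH ?_ ?_
    · intro z hzt hzF
      by_contra hzs
      have hzH : z ∈ H := htH hzt
      have : z ∈ t ∩ (F ∩ H) := Finset.mem_inter.mpr ⟨hzt, Finset.mem_inter.mpr ⟨hzF, hzH⟩⟩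
      rw [← hagree] at this
      exact hzs (Finset.mem_inter.mp this).1
    · intro z hzs hzH
      have : z ∈ u := Finset.mem_inter.mpr ⟨hzs, hzH⟩
      rw [hagree] at this
      exact (Finset.mem_inter.mp this).1
  -- but elemProd F s ≤ y and elemProd H t ≤ yᶜ
  apply hcompat
  have hles : elemProd F s ≤ y := le_trans (Finset.le_sup hs𝒜) hxy
  have hlet : elemProd H t ≤ yᶜ := by rw [hyc]; exact Finset.le_sup ht𝒞
  have := inf_le_inf hles hlet
  rw [inf_compl_eq_bot] at this
  exact le_bot_iff.mp this

end Interp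


section Card

theorem mk_finset_le (α : Type u) : #(Finset α) ≤ max #α ℵ₀ := by
  cases finite_or_infinite α with
  | inl h => exact le_max_of_le_right Cardinal.mk_le_aleph0
  | inr h => exact le_max_of_le_left (le_of_eq (Cardinal.mk_finset_of_infinite α))

theorem max_mul_aleph0 (a : Cardinal.{u}) : max a ℵ₀ * ℵ₀ = max a ℵ₀ := by
  rw [Cardinal.mul_eq_max (le_max_right _ _) le_rfl]
  exact max_eq_left (le_max_right _ _)

theorem mk_boolGen_le [DecidableEq B] (S : Set B) : #(boolGen S) ≤ max #S ℵ₀ := by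
  classical
  have hsub : boolGen S ⊆ ⋃ (T : Finset S),
      boolGen (↑(T.image Subtype.val) : Set B) := by
    intro b hb
    obtain ⟨F, hF, hbF⟩ := mem_boolGen_finite hb
    refine Set.mem_iUnion.mpr ⟨F.attach.image (fun x => (⟨x.1, hF x.2⟩ : S)), ?_⟩
    have heq : ((F.attach.image (fun x => (⟨x.1, hF x.2⟩ : S))).image Subtype.val) = F := by
      ext z
      simp
      exact fun hz => hF hz
    rw [heq]
    exact hbF
  calc #(boolGen S) ≤ #(⋃ (T : Finset S), (boolGen (↑(T.image Subtype.val) : Set B))) :=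
        Cardinal.mk_le_mk_of_subset hsub
    _ ≤ #(Finset S) * ⨆ (T : Finset S), #(boolGen (↑(T.image Subtype.val) : Set B)) :=
        Cardinal.mk_iUnion_le _
    _ ≤ max #S ℵ₀ * ℵ₀ := by
        refine mul_le_mul' (mk_finset_le _) (ciSup_le' fun T => ?_)
        have h1 : (boolGen (↑(T.image Subtype.val) : Set B)).Finite := boolGen_finset_finite _
        have := h1.countable.to_subtype
        exact Cardinal.mk_le_aleph0
    _ = max #S ℵ₀ := max_mul_aleph0 _

end Card

section Main

variable [DecidableEq B] {G : Set B}

theorem pigeonhole_interp (hfree : IsFreeGens G) (supp : B → Finset B)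
    (hsuppG : ∀ b, ↑(supp b) ⊆ G) (hsuppMem : ∀ b, b ∈ boolGen (↑(supp b) : Set B))
    {d0 : B} {T : Set B} (hT : T.Infinite) (hle : ∀ e ∈ T, d0 ≤ e) :
    ∃ v : B, d0 ≤ v ∧
      {e | e ∈ T ∧ v ≤ e ∧ v ∈ boolGen (↑(supp d0 ∩ supp e) : Set B)}.Infinite := by
  classical
  have hinterp : ∀ e, e ∈ T → ∃ ρ, ρ ∈ boolGen (↑(supp d0 ∩ supp e) : Set B) ∧
      d0 ≤ ρ ∧ ρ ≤ e := by
    intro e he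
    obtain ⟨r, hr1, hr2, hr3⟩ := interp hfree (hsuppG d0) (hsuppG e)
      (hsuppMem d0) (hsuppMem e) (hle e he)
    exact ⟨r, hr1, hr2, hr3⟩
  choose ρ hρmem hρge hρle using hinterp
  set ρ' : B → B := fun e => if h : e ∈ T then ρ e h else ⊥ with hρ'
  have hρ'mem : ∀ e ∈ T, ρ' e ∈ boolGen (↑(supp d0) : Set B) := by
    intro e he
    simp only [hρ']
    rw [dif_pos he]
    exact boolGen_mono (Finset.coe_subset.mpr Finset.inter_subset_left) (hρmem e he)
  have hcover : T ⊆ ⋃ v ∈ boolGen (↑(supp d0) : Set B), {e | e ∈ T ∧ ρ' e = v} := by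
    intro e he
    exact Set.mem_biUnion (hρ'mem e he) ⟨he, rfl⟩
  have hexv : ∃ v ∈ boolGen (↑(supp d0) : Set B), {e | e ∈ T ∧ ρ' e = v}.Infinite := by
    by_contra hall
    push_neg at hall
    exact hT (Set.Finite.subset (Set.Finite.biUnion (boolGen_finset_finite (supp d0))
      (fun v hv => hall v hv)) hcover)
  obtain ⟨v, hvmem, hvinf⟩ := hexv
  obtain ⟨e0, he0T, he0v⟩ := hvinf.nonempty
  have hd0v : d0 ≤ v := by
    rw [← he0v]
    simp only [hρ']
    rw [dif_pos he0T]
    exact hρge e0 he0T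
  refine ⟨v, hd0v, Set.Infinite.mono ?_ hvinf⟩
  rintro e ⟨heT, hev⟩
  have h1 : ρ' e = ρ e heT := by simp only [hρ']; rw [dif_pos heT]
  refine ⟨heT, ?_, ?_⟩
  · rw [← hev, h1]; exact hρle e heT
  · rw [← hev, h1]; exact hρmem e heT


theorem aux_main (hfree : IsFreeGens G) (hgen : boolGen G = Set.univ) :
    ∀ c : Cardinal.{u}, ∀ Q : Set B, #Q ≤ c → (⊥ : B) ∉ Q →
    ∃ D : Set B, D ⊆ Q ∧ (∀ q ∈ Q, ∃ d ∈ D, d ≤ q) ∧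
      (∀ r : B, r ≠ ⊥ → (∃ d ∈ D, d ≤ r) → {e | e ∈ D ∧ r ≤ e}.Finite) := by
  classical
  have hsupp : ∀ b : B, ∃ F : Finset B, ↑F ⊆ G ∧ b ∈ boolGen (↑F : Set B) := by
    intro b
    exact mem_boolGen_finite (by rw [hgen]; trivial)
  choose supp hsuppG hsuppMem using hsupp
  intro c
  induction c using WellFoundedLT.induction with
  | _ c IH =>
  intro Q hQc hbotQ
  by_cases hcnt : #Q ≤ ℵ₀
  · -- countable case
    have hQcount : Countable Q := Cardinal.mk_le_aleph0_iff.mp hcnt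
    obtain ⟨f, hf⟩ := (countable_iff_exists_injective Q).mp hQcount
    set g : B → ℕ := fun b => if h : b ∈ Q then f ⟨b, h⟩ else 0 with hg
    have hginj : Set.InjOn g Q := by
      intro a ha b hb hab
      simp only [hg] at hab
      rw [dif_pos ha, dif_pos hb] at hab
      exact congrArg Subtype.val (hf hab)
    have hgval : ∀ a (ha : a ∈ Q), g a = f ⟨a, ha⟩ := by
      intro a ha
      simp only [hg]
      rw [dif_pos ha]
    refine ⟨{q | q ∈ Q ∧ ∀ q' ∈ Q, q' ≤ q → g q ≤ g q'}, fun q hq => hq.1, ?_, ?_⟩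
    · intro q hq
      have hne : (g '' {q' | q' ∈ Q ∧ q' ≤ q}).Nonempty := ⟨g q, q, ⟨hq, le_rfl⟩, rfl⟩
      obtain ⟨n, ⟨q', hq', rfl⟩, hmin⟩ := Nat.lt_wfRel.wf.has_min _ hne
      refine ⟨q', ⟨hq'.1, ?_⟩, hq'.2⟩
      intro q'' hq'' hle
      by_contra hlt
      push_neg at hlt
      exact hmin (g q'') ⟨q'', ⟨hq'', hle.trans hq'.2⟩, rfl⟩ hlt
    · rintro r hr ⟨d, hdD, hdr⟩
      have hsub : {e | e ∈ {q | q ∈ Q ∧ ∀ q' ∈ Q, q' ≤ q → g q ≤ g q'} ∧ r ≤ e} ⊆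
          {e | e ∈ Q ∧ g e ≤ g d} := by
        rintro e ⟨heD, hre⟩
        exact ⟨heD.1, heD.2 d hdD.1 (hdr.trans hre)⟩
      refine Set.Finite.subset ?_ hsub
      apply Set.Finite.of_finite_image (f := g)
      · apply Set.Finite.subset (Set.finite_Iic (g d))
        rintro n ⟨e, ⟨heQ, hgl⟩, rfl⟩
        exact hgl
      · exact hginj.mono (fun e he => he.1)
  · -- uncountable case
    push_neg at hcnt
    have hκc : #Q ≤ c := hQc
    have hℵκ : ℵ₀ ≤ #Q := hcnt.le
    obtain ⟨j⟩ := Cardinal.eq.mp (Cardinal.mk_ord_toType #Q)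
    haveI : IsWellOrder (#Q).ord.ToType (· < ·) := isWellOrder_lt
    have hIic : ∀ i : (#Q).ord.ToType, #(Set.Iic i) < #Q := by
      intro i
      have h1 : #(Set.Iio i) < #Q := by
        have he2 : #(Set.Iio i) = ((Ordinal.typein
            ((· < ·) : (#Q).ord.ToType → (#Q).ord.ToType → Prop)).toRelEmbedding i).card := by
          refine Eq.trans ?_ (Ordinal.card_typein (r := (· < ·)) i)
          exact Cardinal.mk_congr (Equiv.subtypeEquivRight (fun _ => Iff.rfl))
        rw [he2]
        exact Cardinal.lt_ord.mp (Ordinal.typein_lt_self i)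
      rw [← Set.Iio_insert]
      calc #(insert i (Set.Iio i) : Set _) ≤ #(Set.Iio i) + 1 := Cardinal.mk_insert_le
        _ < #Q := Cardinal.add_lt_of_lt hℵκ h1 (lt_of_lt_of_le Cardinal.one_lt_aleph0 hℵκ)
    set X : (#Q).ord.ToType → Set B := fun i => (fun k => ((j k : B))) '' Set.Iic i with hX
    have hXQ : ∀ i, X i ⊆ Q := by
      rintro i b ⟨k, _, rfl⟩
      exact (j k).2
    have hXcard : ∀ i, #(X i) < #Q := fun i => lt_of_le_of_lt Cardinal.mk_image_le (hIic i)
    have hXmono : ∀ i i', i ≤ i' → X i ⊆ X i' := by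
      rintro i i' h b ⟨k, hk, rfl⟩
      exact ⟨k, le_trans hk h, rfl⟩
    set suppS : Set B → Set B := fun S => ⋃ b ∈ S, (↑(supp b) : Set B) with hsuppSdef
    have hsuppS_mono : ∀ {S T : Set B}, S ⊆ T → suppS S ⊆ suppS T := by
      intro S T h x hx
      simp only [hsuppSdef, Set.mem_iUnion] at hx ⊢
      obtain ⟨b, hb, hxb⟩ := hx
      exact ⟨b, h hb, hxb⟩
    have hsuppS_sub : ∀ {S : Set B} {b}, b ∈ S → (↑(supp b) : Set B) ⊆ suppS S := by
      intro S b hb x hx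
      simp only [hsuppSdef, Set.mem_iUnion]
      exact ⟨b, hb, hx⟩
    have hsuppS_card : ∀ S : Set B, #(suppS S) ≤ max #S ℵ₀ := by
      intro S
      have h1 : suppS S = ⋃ (b : S), (↑(supp (b : B)) : Set B) := by
        simp [hsuppSdef]
      rw [h1]
      calc #(⋃ (b : S), (↑(supp (b : B)) : Set B))
          ≤ #S * ⨆ (b : S), #(↑(supp (b : B)) : Set B) := Cardinal.mk_iUnion_le _
        _ ≤ max #S ℵ₀ * ℵ₀ := by
            refine mul_le_mul' (le_max_left _ _) (ciSup_le' fun b => ?_)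
            have := (supp (b : B)).finite_toSet.countable.to_subtype
            exact Cardinal.mk_le_aleph0
        _ = max #S ℵ₀ := max_mul_aleph0 _
    have hwex : ∀ r : B, ∃ q : B, (∃ q' ∈ Q, q' ≤ r) → q ∈ Q ∧ q ≤ r := by
      intro r
      by_cases h : ∃ q' ∈ Q, q' ≤ r
      · obtain ⟨q', hq'1, hq'2⟩ := h
        exact ⟨q', fun _ => ⟨hq'1, hq'2⟩⟩
      · exact ⟨⊥, fun h' => absurd h' h⟩
    choose w hwspec using hwex
    set clStep : Set B → Set B := fun S =>
      S ∪ (w '' {r | r ∈ boolGen (suppS S) ∧ ∃ q' ∈ Q, q' ≤ r}) with hclStep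
    have hclStep_sub : ∀ S : Set B, S ⊆ clStep S := fun S => Set.subset_union_left
    have hclStep_Q : ∀ S : Set B, S ⊆ Q → clStep S ⊆ Q := by
      rintro S hSQ b (hb | ⟨r, hr, rfl⟩)
      · exact hSQ hb
      · exact (hwspec r hr.2).1
    have hclStep_mono : ∀ {S T : Set B}, S ⊆ T → clStep S ⊆ clStep T := by
      rintro S T h b (hb | ⟨r, hr, rfl⟩)
      · exact Set.subset_union_left (h hb)
      · exact Set.subset_union_right ⟨r, ⟨boolGen_mono (hsuppS_mono h) hr.1, hr.2⟩, rfl⟩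
    have hclStep_card : ∀ S : Set B, #(clStep S) ≤ max #S ℵ₀ := by
      intro S
      have h1 : #(clStep S) ≤ #S + #(boolGen (suppS S)) := by
        refine le_trans (Cardinal.mk_union_le _ _) (add_le_add le_rfl ?_)
        exact le_trans Cardinal.mk_image_le (Cardinal.mk_le_mk_of_subset (fun r hr => hr.1))
      have h2 : #(boolGen (suppS S)) ≤ max #S ℵ₀ :=
        le_trans (mk_boolGen_le _) (max_le (le_trans (hsuppS_card S) le_rfl) (le_max_right _ _))
      exact le_trans h1 (Cardinal.add_le_of_le (le_max_right _ _) (le_max_left _ _) h2)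
    set it : ℕ → Set B → Set B := fun n S => clStep^[n] S with hit
    have hit_zero : ∀ S, it 0 S = S := fun S => rfl
    have hit_succ : ∀ n S, it (n + 1) S = clStep (it n S) := by
      intro n S
      simp only [hit]
      exact Function.iterate_succ_apply' clStep n S
    have hit_mono_n : ∀ S, Monotone (fun n => it n S) := by
      intro S
      apply monotone_nat_of_le_succ
      intro n
      rw [hit_succ]
      exact hclStep_sub _
    have hit_mono : ∀ n, ∀ {S T : Set B}, S ⊆ T → it n S ⊆ it n T := by
      intro n
      induction n with
      | zero => intro S T h; simpa [hit_zero] using h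
      | succ n ih =>
        intro S T h
        rw [hit_succ, hit_succ]
        exact hclStep_mono (ih h)
    have hit_Q : ∀ n, ∀ {S : Set B}, S ⊆ Q → it n S ⊆ Q := by
      intro n
      induction n with
      | zero => intro S h; simpa [hit_zero] using h
      | succ n ih =>
        intro S h
        rw [hit_succ]
        exact hclStep_Q _ (ih h)
    have hit_card : ∀ (S : Set B) (n), #(it n S) ≤ max #S ℵ₀ := by
      intro S n
      induction n with
      | zero => rw [hit_zero]; exact le_max_left _ _
      | succ n ih =>
        rw [hit_succ]
        exact le_trans (hclStep_card _) (max_le ih (le_max_right _ _))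
    set cl : Set B → Set B := fun S => ⋃ n : ℕ, it n S with hcl
    have hcl_sub : ∀ S, S ⊆ cl S := by
      intro S
      have := Set.subset_iUnion (fun n => it n S) 0
      rw [hit_zero] at this
      exact this
    have hcl_Q : ∀ S, S ⊆ Q → cl S ⊆ Q := by
      intro S hS
      exact Set.iUnion_subset fun n => hit_Q n hS
    have hcl_mono : ∀ {S T : Set B}, S ⊆ T → cl S ⊆ cl T := by
      intro S T h
      exact Set.iUnion_subset fun n =>
        (hit_mono n h).trans (Set.subset_iUnion (fun m => it m T) n)
    have hcl_card : ∀ S : Set B, #(cl S) ≤ max #S ℵ₀ := by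
      intro S
      have heq : cl S = ⋃ (n : ULift.{u} ℕ), it n.down S := by
        ext x
        simp only [hcl, Set.mem_iUnion]
        exact ⟨fun ⟨n, h⟩ => ⟨⟨n⟩, h⟩, fun ⟨n, h⟩ => ⟨n.down, h⟩⟩
      rw [heq]
      calc #(⋃ (n : ULift.{u} ℕ), it n.down S)
          ≤ #(ULift.{u} ℕ) * ⨆ (n : ULift.{u} ℕ), #(it n.down S) := Cardinal.mk_iUnion_le _
        _ ≤ ℵ₀ * max #S ℵ₀ := by
            refine mul_le_mul' (le_of_eq (Cardinal.mk_denumerable _)) ?_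
            exact ciSup_le' fun n => hit_card S n.down
        _ = max #S ℵ₀ := by
            rw [mul_comm]
            exact max_mul_aleph0 _
    have hcl_closed : ∀ S : Set B, ∀ r ∈ boolGen (suppS (cl S)), (∃ q' ∈ Q, q' ≤ r) →
        ∃ q'' ∈ cl S, q'' ≤ r := by
      intro S r hr hex
      have hs1 : suppS (cl S) = ⋃ n, suppS (it n S) := by
        ext x
        simp only [hsuppSdef, hcl, Set.mem_iUnion]
        constructor
        · rintro ⟨b, ⟨n, hbn⟩, hx⟩
          exact ⟨n, b, hbn, hx⟩
        · rintro ⟨n, b, hbn, hx⟩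
          exact ⟨b, ⟨n, hbn⟩, hx⟩
      rw [hs1] at hr
      obtain ⟨n, hn⟩ := boolGen_iUnion_nat
        (fun n m hnm => hsuppS_mono (hit_mono_n S hnm)) hr
      refine ⟨w r, ?_, (hwspec r hex).2⟩
      have hwmem : w r ∈ it (n + 1) S := by
        rw [hit_succ]
        exact Set.subset_union_right ⟨r, ⟨hn, hex⟩, rfl⟩
      exact Set.subset_iUnion (fun m => it m S) (n + 1) hwmem
    set QL : (#Q).ord.ToType → Set B := fun i => cl (X i) with hQL
    have hQLQ : ∀ i, QL i ⊆ Q := fun i => hcl_Q _ (hXQ i)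
    have hQLcard : ∀ i, #(QL i) < #Q := by
      intro i
      refine lt_of_le_of_lt (hcl_card _) ?_
      exact max_lt (hXcard i) hcnt
    have hQLcover : ∀ q ∈ Q, ∃ i, q ∈ QL i := by
      intro q hq
      refine ⟨j.symm ⟨q, hq⟩, hcl_sub _ ?_⟩
      exact ⟨j.symm ⟨q, hq⟩, Set.mem_Iic.mpr le_rfl, by simp⟩
    have hQLclosed : ∀ i, ∀ r ∈ boolGen (suppS (QL i)), (∃ q' ∈ Q, q' ≤ r) →
        ∃ q'' ∈ QL i, q'' ≤ r := by
      intro i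
      simp only [hQL]
      exact hcl_closed (X i)
    have hWex : ∀ S : Set B, ∃ D : Set B, (#S < c ∧ (⊥ : B) ∉ S) →
        (D ⊆ S ∧ (∀ q ∈ S, ∃ d ∈ D, d ≤ q) ∧
          ∀ r : B, r ≠ ⊥ → (∃ d ∈ D, d ≤ r) → {e | e ∈ D ∧ r ≤ e}.Finite) := by
      intro S
      by_cases h : #S < c ∧ (⊥ : B) ∉ S
      · obtain ⟨D, hD⟩ := IH (#S) h.1 S le_rfl h.2
        exact ⟨D, fun _ => hD⟩
      · exact ⟨∅, fun h' => absurd h' h⟩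
    choose WSel hWSel using hWex
    have wfι : WellFounded ((· < ·) : (#Q).ord.ToType → (#Q).ord.ToType → Prop) :=
      wellFounded_lt
    set Dfun : (#Q).ord.ToType → Set B := wfι.fix (fun i rec =>
      WSel {q | q ∈ QL i ∧ (∀ jj, jj < i → q ∉ QL jj) ∧
        ∀ jj, ∀ hj : jj < i, ∀ d ∈ rec jj hj, ¬ d ≤ q}) with hDfun
    have hDeq : ∀ i, Dfun i = WSel {q | q ∈ QL i ∧ (∀ jj, jj < i → q ∉ QL jj) ∧
        ∀ jj, ∀ hj : jj < i, ∀ d ∈ Dfun jj, ¬ d ≤ q} := by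
      intro i
      rw [hDfun]
      exact wfι.fix_eq _ i
    have hDspec : ∀ i, (Dfun i ⊆ Q) ∧ (Dfun i ⊆ QL i) ∧
        (∀ e ∈ Dfun i, ∀ jj, jj < i → ∀ d ∈ Dfun jj, ¬ d ≤ e) ∧
        (∀ q, q ∈ QL i → (∀ jj, jj < i → q ∉ QL jj) →
          (∀ jj, jj < i → ∀ d ∈ Dfun jj, ¬ d ≤ q) → ∃ d ∈ Dfun i, d ≤ q) ∧
        (∀ r : B, r ≠ ⊥ → (∃ d ∈ Dfun i, d ≤ r) → {e | e ∈ Dfun i ∧ r ≤ e}.Finite) := by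
      intro i
      have hDeqi := hDeq i
      set S : Set B := {q | q ∈ QL i ∧ (∀ jj, jj < i → q ∉ QL jj) ∧
        ∀ jj, ∀ hj : jj < i, ∀ d ∈ Dfun jj, ¬ d ≤ q} with hSdef
      have hSsub : S ⊆ QL i := fun q hq => hq.1
      have hcond : #S < c ∧ (⊥ : B) ∉ S := by
        constructor
        · exact lt_of_lt_of_le (lt_of_le_of_lt (Cardinal.mk_le_mk_of_subset hSsub)
            (hQLcard i)) hκc
        · intro hbot
          exact hbotQ (hQLQ i (hSsub hbot))
      obtain ⟨h1, h2, h3⟩ := hWSel S hcond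
      rw [← hDeqi] at h1 h2 h3
      refine ⟨fun e he => hQLQ i (h1 he).1, fun e he => (h1 he).1,
        fun e he jj hjj d hd hle => (h1 he).2.2 jj hjj d hd hle,
        fun q hq hq2 hq3 => h2 q ⟨hq, hq2, fun jj hjj d hd hle => hq3 jj hjj d hd hle⟩, h3⟩
    have dens : ∀ i, ∀ q ∈ QL i, ∃ jj, jj ≤ i ∧ ∃ d ∈ Dfun jj, d ≤ q := by
      intro i
      refine wfι.induction
        (C := fun i => ∀ q ∈ QL i, ∃ jj, jj ≤ i ∧ ∃ d ∈ Dfun jj, d ≤ q) i ?_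
      intro i IH2 q hq
      by_cases h1 : ∃ jj, jj < i ∧ q ∈ QL jj
      · obtain ⟨jj, hjj, hqjj⟩ := h1
        obtain ⟨kk, hkk, hd⟩ := IH2 jj hjj q hqjj
        exact ⟨kk, le_trans hkk hjj.le, hd⟩
      · by_cases h2 : ∃ jj, jj < i ∧ ∃ d ∈ Dfun jj, d ≤ q
        · obtain ⟨jj, hjj, d, hd1, hd2⟩ := h2
          exact ⟨jj, hjj.le, d, hd1, hd2⟩
        · push_neg at h1 h2
          obtain ⟨d, hd1, hd2⟩ := (hDspec i).2.2.2.1 q hq h1 h2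
          exact ⟨i, le_rfl, d, hd1, hd2⟩
    refine ⟨⋃ i, Dfun i, Set.iUnion_subset fun i => (hDspec i).1, ?_, ?_⟩
    · intro q hq
      obtain ⟨i, hi⟩ := hQLcover q hq
      obtain ⟨jj, _, d, hd1, hd2⟩ := dens i q hi
      exact ⟨d, Set.mem_iUnion.mpr ⟨jj, hd1⟩, hd2⟩
    · rintro r hr ⟨d0, hd0D, hd0r⟩
      rw [← Set.not_infinite]
      intro hinf
      have hd0Q : d0 ∈ Q := by
        obtain ⟨i0, hi0⟩ := Set.mem_iUnion.mp hd0D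
        exact (hDspec i0).1 hi0
      obtain ⟨v, hd0v, hvinf⟩ := pigeonhole_interp hfree supp hsuppG hsuppMem hinf
        (fun e he => hd0r.trans he.2)
      have hd0ne : d0 ≠ ⊥ := fun h => hbotQ (h ▸ hd0Q)
      have hvne : v ≠ ⊥ := by
        intro h
        exact hd0ne (le_bot_iff.mp (h ▸ hd0v))
      obtain ⟨estar0, hestar0⟩ := hvinf.nonempty
      have hInonempty : {i | ∃ e, (e ∈ {e | e ∈ {e | e ∈ (⋃ i, Dfun i) ∧ r ≤ e} ∧ v ≤ e ∧
          v ∈ boolGen (↑(supp d0 ∩ supp e) : Set B)}) ∧ e ∈ Dfun i}.Nonempty := by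
        obtain ⟨i0, hi0⟩ := Set.mem_iUnion.mp hestar0.1.1
        exact ⟨i0, estar0, hestar0, hi0⟩
      obtain ⟨istar, ⟨estar, hestarS', hestarD⟩, hmin⟩ := wfι.has_min _ hInonempty
      have hvQL : v ∈ boolGen (suppS (QL istar)) := by
        refine boolGen_mono ?_ hestarS'.2.2
        refine le_trans ?_ (hsuppS_sub ((hDspec istar).2.1 hestarD))
        exact_mod_cast Finset.coe_subset.mpr Finset.inter_subset_right
      obtain ⟨q', hq'QL, hq'v⟩ := hQLclosed istar v hvQL ⟨d0, hd0Q, hd0v⟩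
      obtain ⟨jj, hjji, d', hd'D, hd'q'⟩ := dens istar q' hq'QL
      have hd'v : d' ≤ v := hd'q'.trans hq'v
      rcases lt_or_eq_of_le hjji with hlt | heq
      · exact ((hDspec istar).2.2.1 estar hestarD jj hlt d' hd'D)
          (hd'v.trans hestarS'.2.1)
      · subst heq
        have hS'sub : {e | e ∈ {e | e ∈ (⋃ i, Dfun i) ∧ r ≤ e} ∧ v ≤ e ∧
            v ∈ boolGen (↑(supp d0 ∩ supp e) : Set B)} ⊆ {e | e ∈ Dfun jj ∧ v ≤ e} := by
          rintro e ⟨he1, hev, hemem⟩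
          obtain ⟨ie, hie⟩ := Set.mem_iUnion.mp he1.1
          have hieI : ie ∈ {i | ∃ e, (e ∈ {e | e ∈ {e | e ∈ (⋃ i, Dfun i) ∧ r ≤ e} ∧ v ≤ e ∧
              v ∈ boolGen (↑(supp d0 ∩ supp e) : Set B)}) ∧ e ∈ Dfun i} :=
            ⟨e, ⟨he1, hev, hemem⟩, hie⟩
          have hnlt : ¬ ie < jj := hmin ie hieI
          rcases (not_lt.mp hnlt).lt_or_eq with hlt2 | heq2
          · exact absurd (hd'v.trans hev) ((hDspec ie).2.2.1 e hie jj hlt2 d' hd'D)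
          · exact ⟨heq2 ▸ hie, hev⟩
        exact (hvinf.mono hS'sub)
          ((hDspec jj).2.2.2.2 v hvne ⟨d', hd'D, hd'v⟩)


end Main

end AOL


/-- Every subset `Q` of a free boolean algebra is almost `ω`-op-like. -/
theorem subset_free_boolean_almost_omega_op_like (G : Set B) (hfree : IsFreeGens G)
    (hgen : boolGen G = Set.univ) (Q : Set B) :
    ∃ D ⊆ Q, (∀ q ∈ Q, ∃ d ∈ D, d ≤ q) ∧ ∀ d ∈ D, {e | e ∈ D ∧ d < e}.Finite := by
  classical
  by_cases hbQ : (⊥ : B) ∈ Q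
  · refine ⟨{⊥}, by simpa using hbQ, fun q hq => ⟨⊥, rfl, bot_le⟩, ?_⟩
    intro d hd
    refine Set.Finite.subset Set.finite_empty ?_
    rintro e ⟨he, hlt⟩
    rw [Set.mem_singleton_iff] at he
    rw [Set.mem_singleton_iff] at hd
    subst he
    subst hd
    exact absurd hlt (lt_irrefl _)
  · obtain ⟨D, hDQ, hdens, hfin⟩ := AOL.aux_main (G := G) hfree hgen (#Q) Q le_rfl hbQ
    refine ⟨D, hDQ, hdens, ?_⟩
    intro d hdD
    rw [← Set.not_infinite]
    intro hinf
    have hsupp : ∀ b : B, ∃ F : Finset B, ↑F ⊆ G ∧ b ∈ boolGen (↑F : Set B) := fun b =>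
      AOL.mem_boolGen_finite (by rw [hgen]; trivial)
    choose supp hsuppG hsuppMem using hsupp
    have hle : ∀ e ∈ {e | e ∈ D ∧ d < e}, d ≤ e := fun e he => he.2.le
    obtain ⟨v, hdv, hvinf⟩ := AOL.pigeonhole_interp hfree supp hsuppG hsuppMem hinf hle
    have hdne : d ≠ ⊥ := fun h => hbQ (h ▸ hDQ hdD)
    have hvne : v ≠ ⊥ := fun h => hdne (le_bot_iff.mp (h ▸ hdv))
    have hsub : {e | e ∈ {e | e ∈ D ∧ d < e} ∧ v ≤ e ∧
        v ∈ boolGen (↑(supp d ∩ supp e) : Set B)} ⊆ {e | e ∈ D ∧ v ≤ e} := by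
      rintro e ⟨he1, hev, _⟩
      exact ⟨he1.1, hev⟩
    exact (hvinf.mono hsub) (hfin v hvne ⟨d, hdD, hdv⟩)
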